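/- The error function r ↦ ε(r) giving the optimal-threshold TARP error for the equal-covariance Gaussian two-class problem is continuous on ℝ^p \ {0}, and attains its minimum (the Bayes error) at r = Σ^{-1}(μ₂ − μ₁) (up to positive scaling). Consequently, if r_n → Σ^{-1}(μ₂−μ₁), then ε(r_n) → Bayes error. -/

import Mathlib

open Filter MeasureTheory
open scoped RealInnerProductSpace

/-- The standard normal cumulative distribution function. -/
noncomputable def stdNormalCDF (x : ℝ) : ℝ :=
  (Real.sqrt (2 * Real.pi))⁻¹ * ∫ t in Set.Iic x, Real.exp (-t ^ 2 / 2)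

lemma gauss_integrable : MeasureTheory.Integrable (fun t : ℝ => Real.exp (-t ^ 2 / 2)) := by
  have := integrable_exp_neg_mul_sq (b := (1/2 : ℝ)) (by norm_num)
  convert this using 2 with t
  ring_nf

lemma stdNormalCDF_cont : Continuous stdNormalCDF := by
  have h : stdNormalCDF = fun x : ℝ => (Real.sqrt (2 * Real.pi))⁻¹ *
      ((∫ t in Set.Iic (0:ℝ), Real.exp (-t ^ 2 / 2)) + ∫ t in (0:ℝ)..x, Real.exp (-t ^ 2 / 2)) := by
    funext x
    unfold stdNormalCDF
    have hI0 : IntegrableOn (fun t : ℝ => Real.exp (-t ^ 2 / 2)) (Set.Iic 0) :=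
      gauss_integrable.integrableOn
    have hIx : IntegrableOn (fun t : ℝ => Real.exp (-t ^ 2 / 2)) (Set.Iic x) :=
      gauss_integrable.integrableOn
    rw [← intervalIntegral.integral_Iic_sub_Iic hI0 hIx]; ring
  rw [h]
  exact continuous_const.mul (continuous_const.add
    (intervalIntegral.continuous_primitive (fun a b => gauss_integrable.intervalIntegrable) 0))

lemma stdNormalCDF_mono : Monotone stdNormalCDF := by
  intro x y hxy
  unfold stdNormalCDF
  have h : (∫ t in Set.Iic x, Real.exp (-t ^ 2 / 2)) ≤
      ∫ t in Set.Iic y, Real.exp (-t ^ 2 / 2) := by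
    apply setIntegral_mono_set gauss_integrable.integrableOn
    · exact Filter.Eventually.of_forall fun t => (Real.exp_pos _).le
    · exact HasSubset.Subset.eventuallyLE (Set.Iic_subset_Iic.2 hxy)
  have : (0:ℝ) ≤ (Real.sqrt (2 * Real.pi))⁻¹ := inv_nonneg.2 (Real.sqrt_nonneg _)
  exact mul_le_mul_of_nonneg_left h this

/-- (Simplified version with `Σ = I` and equal priors.) The optimal-threshold TARP error
`ε(r) = Φ(−|r·d|/(2‖r‖))` is continuous away from `0`, attains its minimum (the Bayes error
`Φ(−‖d‖/2)`) in the direction `d = μ₂ − μ₁`, and `ε(rₙ) → Bayes error` whenever `rₙ → d`. -/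
theorem tarp_error_continuous_min (p : ℕ) (μ1 μ2 : EuclideanSpace ℝ (Fin p))
    (hμ : μ1 ≠ μ2) :
    letI d := μ2 - μ1
    letI ε : EuclideanSpace ℝ (Fin p) → ℝ :=
      fun r => stdNormalCDF (-|⟪r, d⟫| / (2 * ‖r‖))
    ContinuousOn ε {0}ᶜ ∧
    (∀ r : EuclideanSpace ℝ (Fin p), r ≠ 0 → ε d ≤ ε r) ∧
    ε d = stdNormalCDF (-‖d‖ / 2) ∧
    ∀ rn : ℕ → EuclideanSpace ℝ (Fin p), (∀ n, rn n ≠ 0) →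
      Tendsto rn atTop (nhds d) →
      Tendsto (fun n => ε (rn n)) atTop (nhds (stdNormalCDF (-‖d‖ / 2))) := by
  set d := μ2 - μ1 with hd_def
  set ε : EuclideanSpace ℝ (Fin p) → ℝ :=
    fun r => stdNormalCDF (-|⟪r, d⟫| / (2 * ‖r‖)) with hε_def
  have hd : d ≠ 0 := sub_ne_zero.2 (Ne.symm hμ)
  have hdn : ‖d‖ ≠ 0 := norm_ne_zero_iff.2 hd
  -- continuity of the inner argument
  have hcont : ContinuousOn (fun r : EuclideanSpace ℝ (Fin p) =>
      -|⟪r, d⟫| / (2 * ‖r‖)) {0}ᶜ := by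
    apply ContinuousOn.div
    · exact (((continuous_inner.comp (Continuous.prodMk_left d)).abs.neg).comp
        continuous_id).continuousOn
      |>.congr (fun r _ => by simp [real_inner_comm])
    · exact (continuous_const.mul continuous_norm).continuousOn
    · intro r hr
      simp only [Set.mem_compl_iff, Set.mem_singleton_iff] at hr
      have h0 : 0 < ‖r‖ := norm_pos_iff.mpr hr
      positivity
  have hεcont : ContinuousOn ε {0}ᶜ :=
    stdNormalCDF_cont.comp_continuousOn hcont
  have hεd : ε d = stdNormalCDF (-‖d‖ / 2) := by
    show stdNormalCDF (-|⟪d, d⟫| / (2 * ‖d‖)) = _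
    rw [real_inner_self_eq_norm_sq]
    congr 1
    rw [abs_of_nonneg (by positivity)]
    field_simp
  refine ⟨hεcont, ?_, hεd, ?_⟩
  · intro r hr
    rw [hεd]
    apply stdNormalCDF_mono
    have hrn : (0:ℝ) < ‖r‖ := norm_pos_iff.2 hr
    rw [div_le_div_iff₀ (by norm_num) (by positivity)]
    have hcs : |⟪r, d⟫| ≤ ‖r‖ * ‖d‖ := abs_real_inner_le_norm r d
    nlinarith
  · intro rn hrn htend
    have hca : ContinuousAt ε d := by
      have : {(0 : EuclideanSpace ℝ (Fin p))}ᶜ ∈ nhds d :=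
        (isOpen_compl_singleton).mem_nhds (by simpa using hd)
      exact (hεcont d (by simpa using hd)).continuousAt this
    rw [← hεd]
    exact hca.tendsto.comp htend
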